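/- Let G be a finite simple graph with adjacency matrix A and degree matrix D = diag(A𝟙), and let μ ∈ [0,1]. For a walk w: i = i_0, i_1, …, i_k = j define its number of backtracking instances b(w) = #{ℓ : 0 ≤ ℓ ≤ k−2, i_ℓ = i_{ℓ+2}}, and define Q_k ∈ ℝ^{n×n} entrywise by (Q_k)_{ij} = Σ_w (1−μ)^{b(w)}, the sum running over all walks w of length k from i to j. Then Q_0 = I, Q_1 = A, Q_2 = A² − μD, and for every k ≥ 2 the recurrence Q_{k+1} = A·Q_k + μ(μI − D)·Q_{k−1} holds. -/

import Mathlib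

open Matrix

/-- The number of backtracking instances of a walk `w`, i.e. the number of indices
`ℓ` with `0 ≤ ℓ ≤ length − 2` such that the `ℓ`-th and `(ℓ+2)`-th vertices coincide. -/
def btCount {n : ℕ} {G : SimpleGraph (Fin n)} {i j : Fin n} (w : G.Walk i j) : ℕ :=
  ((Finset.range (w.length - 1)).filter (fun ℓ => w.getVert ℓ = w.getVert (ℓ + 2))).card

/-- The backtrack-downweighted walk count: the sum over all walks `w` of length `k`
from `i` to `j` of the weight `(1 − μ)^{b(w)}`, where `b(w)` is the number of
backtracking instances of `w`. -/
def btdwCount {n : ℕ} (G : SimpleGraph (Fin n)) [DecidableRel G.Adj]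
    (μ : ℝ) (k : ℕ) (i j : Fin n) : ℝ :=
  ∑ w ∈ G.finsetWalkLength k i j, (1 - μ) ^ btCount w

namespace BtdwAux
open SimpleGraph Finset

variable {n : ℕ} {G : SimpleGraph (Fin n)}

lemma btCount_eq_sum {i j : Fin n} (w : G.Walk i j) :
    btCount w = ∑ ℓ ∈ Finset.range (w.length - 1),
      (if w.getVert ℓ = w.getVert (ℓ + 2) then 1 else 0) := by
  simp only [btCount, Finset.card_filter]

lemma btCount_cons {i m j : Fin n} (h : G.Adj i m) (u : G.Walk m j) (hu : 1 ≤ u.length) :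
    btCount (Walk.cons h u) = btCount u + (if u.getVert 1 = i then 1 else 0) := by
  rw [btCount_eq_sum, btCount_eq_sum]
  have hl : (Walk.cons h u).length - 1 = (u.length - 1) + 1 := by
    simp [SimpleGraph.Walk.length_cons]; omega
  rw [hl, Finset.sum_range_succ']
  congr 1
  simp [SimpleGraph.Walk.getVert_cons_succ, SimpleGraph.Walk.getVert_zero, eq_comm]

/-- decompose a walk into first vertex + tail -/
def decomp {i j : Fin n} : G.Walk i j → (m : Fin n) × G.Walk m j
  | SimpleGraph.Walk.nil => ⟨_, SimpleGraph.Walk.nil⟩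
  | SimpleGraph.Walk.cons _ u => ⟨_, u⟩

lemma sum_walk_succ [DecidableRel G.Adj] (k : ℕ) (i j : Fin n)
    (F : G.Walk i j → ℝ) (Gf : (m : Fin n) → G.Walk m j → ℝ)
    (hFG : ∀ (m : Fin n) (h : G.Adj i m) (u : G.Walk m j), u.length = k →
      F (Walk.cons h u) = Gf m u) :
    ∑ w ∈ G.finsetWalkLength (k + 1) i j, F w
      = ∑ x ∈ (G.neighborFinset i).sigma (fun m => G.finsetWalkLength k m j),
          Gf x.1 x.2 := by
  refine Finset.sum_bij' (fun w _ => decomp w)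
    (fun x hx => Walk.cons ((G.mem_neighborFinset i x.1).mp (Finset.mem_sigma.mp hx).1) x.2)
    ?_ ?_ ?_ ?_ ?_
  · intro w hw
    rw [SimpleGraph.mem_finsetWalkLength_iff] at hw
    cases w with
    | nil => simp at hw
    | cons h u =>
      rw [Finset.mem_sigma]
      exact ⟨(G.mem_neighborFinset i _).mpr h,
        SimpleGraph.mem_finsetWalkLength_iff.mpr (by simp at hw; exact hw)⟩
  · intro x hx
    rw [SimpleGraph.mem_finsetWalkLength_iff]
    simp [SimpleGraph.mem_finsetWalkLength_iff.mp (Finset.mem_sigma.mp hx).2]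
  · intro w hw
    rw [SimpleGraph.mem_finsetWalkLength_iff] at hw
    cases w with
    | nil => simp at hw
    | cons h u => rfl
  · intro x hx
    obtain ⟨m, u⟩ := x
    rfl
  · intro w hw
    rw [SimpleGraph.mem_finsetWalkLength_iff] at hw
    cases w with
    | nil => simp at hw
    | cons h u => exact hFG _ h u (by simpa using hw)

end BtdwAux

namespace BtdwAux
open SimpleGraph Finset

lemma card_eq {n : ℕ} {G : SimpleGraph (Fin n)} [DecidableRel G.Adj] (k : ℕ) (i j : Fin n) :
    ((G.finsetWalkLength k i j).card : ℝ) = (G.adjMatrix ℝ ^ k) i j := by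
  rw [SimpleGraph.adjMatrix_pow_apply_eq_card_walk]
  norm_cast
  exact (SimpleGraph.card_set_walk_length_eq G i j k).symm

end BtdwAux


open BtdwAux SimpleGraph

/-- Let `A = G.adjMatrix ℝ`, `D = diag(A𝟙)`, `μ ∈ [0,1]`, and let
`(Q k) i j = Σ_w (1−μ)^{b(w)}` over walks `w` of length `k` from `i` to `j`. Then
`Q 0 = I`, `Q 1 = A`, `Q 2 = A² − μD`, and for every `k ≥ 2`,
`Q (k+1) = A·Q k + μ(μI − D)·Q (k−1)`. -/
theorem btdw_count_recurrence
    {n : ℕ} (G : SimpleGraph (Fin n)) [DecidableRel G.Adj]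
    (A D : Matrix (Fin n) (Fin n) ℝ)
    (hA : A = G.adjMatrix ℝ)
    (hD : D = Matrix.diagonal (A *ᵥ fun _ => (1 : ℝ)))
    (μ : ℝ) (hμ : μ ∈ Set.Icc (0 : ℝ) 1)
    (Q : ℕ → Matrix (Fin n) (Fin n) ℝ)
    (hQ : ∀ k i j, Q k i j = btdwCount G μ k i j) :
    Q 0 = 1 ∧ Q 1 = A ∧ Q 2 = A ^ 2 - μ • D ∧
    ∀ k, 2 ≤ k →
      Q (k + 1) = A * Q k + (μ • (μ • (1 : Matrix (Fin n) (Fin n) ℝ) - D)) * Q (k - 1) := by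
  subst hA hD
  have hconst : ∀ (k : ℕ) (i j : Fin n) (c : ℕ),
      (∀ w ∈ G.finsetWalkLength k i j, btCount w = c) →
      btdwCount G μ k i j = (1 - μ) ^ c * (G.adjMatrix ℝ ^ k) i j := by
    intro k i j c hc
    rw [btdwCount, Finset.sum_congr rfl fun w hw => by rw [hc w hw],
      Finset.sum_const, nsmul_eq_mul, card_eq, mul_comm]
  refine ⟨?_, ?_, ?_, ?_⟩
  · ext i j
    rw [hQ, hconst 0 i j 0 ?_, pow_zero, one_mul, pow_zero]
    intro w hw
    rw [SimpleGraph.mem_finsetWalkLength_iff] at hw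
    simp [btCount, hw]
  · ext i j
    rw [hQ, hconst 1 i j 0 ?_, pow_zero, one_mul, pow_one]
    intro w hw
    rw [SimpleGraph.mem_finsetWalkLength_iff] at hw
    simp [btCount, hw]
  · ext i j
    by_cases hij : i = j
    · subst hij
      rw [hQ, hconst 2 i i 1 ?_, pow_one]
      · have hAA : (G.adjMatrix ℝ ^ 2) i i = ∑ m, G.adjMatrix ℝ i m := by
          rw [pow_two, Matrix.mul_apply]
          refine Finset.sum_congr rfl fun m _ => ?_
          by_cases h : G.Adj i m
          · simp [h, h.symm]
          · simp [h]
        rw [Matrix.sub_apply, Matrix.smul_apply, Matrix.diagonal_apply_eq]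
        have hv : (G.adjMatrix ℝ *ᵥ fun _ => (1:ℝ)) i = ∑ m, G.adjMatrix ℝ i m := by
          simp [Matrix.mulVec, dotProduct]
        rw [hv, ← hAA, smul_eq_mul]
        ring
      · intro w hw
        rw [SimpleGraph.mem_finsetWalkLength_iff] at hw
        have h2 : w.getVert 2 = i := by
          conv_lhs => rw [← hw]
          exact w.getVert_length
        rw [btCount_eq_sum, hw]
        simp [Finset.filter_singleton, SimpleGraph.Walk.getVert_zero, h2]
    · rw [hQ, hconst 2 i j 0 ?_, pow_zero, one_mul]
      · simp [Matrix.sub_apply, Matrix.smul_apply, Matrix.diagonal_apply_ne _ hij]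
      · intro w hw
        rw [SimpleGraph.mem_finsetWalkLength_iff] at hw
        have h2 : w.getVert 2 = j := by
          conv_lhs => rw [← hw]
          exact w.getVert_length
        rw [btCount_eq_sum, hw]
        simp [Finset.filter_singleton, SimpleGraph.Walk.getVert_zero, h2, hij]
  · intro k hk
    obtain ⟨m, rfl⟩ : ∃ m, k = m + 2 := ⟨k - 2, by omega⟩
    ext i j
    have hidx1 : m + 2 + 1 = m + 3 := by omega
    have hidx2 : m + 2 - 1 = m + 1 := by omega
    rw [Matrix.add_apply, Matrix.mul_apply, Matrix.mul_apply, hidx1, hidx2]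
    simp only [hQ]
    set d : ℝ := ((G.neighborFinset i).card : ℝ) with hd
    have hDi : (G.adjMatrix ℝ *ᵥ fun _ => (1:ℝ)) i = d := by
      rw [hd, SimpleGraph.neighborFinset_eq_filter]
      simp [Matrix.mulVec, dotProduct, Finset.sum_boole]
    have hsecond : ∑ p, (μ • (μ • (1 : Matrix (Fin n) (Fin n) ℝ)
          - Matrix.diagonal (G.adjMatrix ℝ *ᵥ fun _ => (1:ℝ)))) i p * btdwCount G μ (m+1) p j
        = μ * (μ - d) * btdwCount G μ (m+1) i j := by
      have hent : ∀ p, (μ • (μ • (1 : Matrix (Fin n) (Fin n) ℝ)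
          - Matrix.diagonal (G.adjMatrix ℝ *ᵥ fun _ => (1:ℝ)))) i p
          = if i = p then μ * (μ - d) else 0 := by
        intro p
        by_cases h : i = p
        · subst h
          simp [Matrix.smul_apply, Matrix.sub_apply, Matrix.one_apply_eq,
            Matrix.diagonal_apply_eq, hDi]
          try ring
        · simp [Matrix.smul_apply, Matrix.sub_apply, Matrix.one_apply_ne h,
            Matrix.diagonal_apply_ne _ h, h]
      rw [Finset.sum_congr rfl fun p _ => by rw [hent p, ite_mul, zero_mul]]
      rw [Finset.sum_ite_eq]
      simp
    have hfirst : ∑ p, G.adjMatrix ℝ i p * btdwCount G μ (m+2) p j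
        = ∑ p ∈ G.neighborFinset i, btdwCount G μ (m+2) p j := by
      rw [SimpleGraph.neighborFinset_eq_filter, Finset.sum_filter]
      refine Finset.sum_congr rfl fun p _ => ?_
      by_cases h : G.Adj i p <;> simp [h]
    have step1 : btdwCount G μ (m+3) i j
        = ∑ x ∈ (G.neighborFinset i).sigma (fun p => G.finsetWalkLength (m+2) p j),
            ((1-μ)^(btCount x.2) - (if x.2.getVert 1 = i then (1:ℝ) else 0)
              * (μ * (1-μ)^(btCount x.2))) := by
      unfold btdwCount
      rw [show m + 3 = (m+2)+1 by omega]
      refine sum_walk_succ (m+2) i j (fun w => (1-μ)^(btCount w))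
        (fun p u => (1-μ)^(btCount u)
          - (if u.getVert 1 = i then (1:ℝ) else 0) * (μ * (1-μ)^(btCount u))) ?_
      intro p h u hu
      rw [btCount_cons h u (by omega), pow_add]
      by_cases hc : u.getVert 1 = i <;> simp [hc] <;> ring
    have hsplit : btdwCount G μ (m+3) i j
        = (∑ p ∈ G.neighborFinset i, btdwCount G μ (m+2) p j)
          - ∑ x ∈ (G.neighborFinset i).sigma (fun p => G.finsetWalkLength (m+2) p j),
              (if x.2.getVert 1 = i then (1:ℝ) else 0) * (μ * (1-μ)^(btCount x.2)) := by
      rw [step1, Finset.sum_sub_distrib]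
      congr 1
      rw [Finset.sum_sigma]
      rfl
    have hT2 : ∑ x ∈ (G.neighborFinset i).sigma (fun p => G.finsetWalkLength (m+2) p j),
          (if x.2.getVert 1 = i then (1:ℝ) else 0) * (μ * (1-μ)^(btCount x.2))
        = μ * ((d - μ) * btdwCount G μ (m+1) i j) := by
      rw [Finset.sum_sigma]
      have inner : ∀ p ∈ G.neighborFinset i,
          ∑ u ∈ G.finsetWalkLength (m+2) p j,
              (if u.getVert 1 = i then (1:ℝ) else 0) * (μ * (1-μ)^(btCount u))
          = ∑ v ∈ G.finsetWalkLength (m+1) i j,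
              μ * ((1-μ)^(btCount v) * (1 - μ * (if v.getVert 1 = p then 1 else 0))) := by
        intro p hp
        rw [show m + 2 = (m+1)+1 by omega,
          sum_walk_succ (m+1) p j _
            (fun q v => if q = i then
              μ * ((1-μ)^(btCount v) * (1 - μ * (if v.getVert 1 = p then 1 else 0))) else 0)
            ?_]
        · rw [Finset.sum_sigma]
          have hpull : ∀ q ∈ G.neighborFinset p,
              (∑ v ∈ G.finsetWalkLength (m+1) q j,
                if q = i then
                  μ * ((1-μ)^(btCount v) * (1 - μ * (if v.getVert 1 = p then 1 else 0))) else 0)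
              = if q = i then (∑ v ∈ G.finsetWalkLength (m+1) q j,
                  μ * ((1-μ)^(btCount v) * (1 - μ * (if v.getVert 1 = p then 1 else 0)))) else 0 := by
            intro q _
            split_ifs <;> simp
          rw [Finset.sum_congr rfl hpull, Finset.sum_ite_eq',
            if_pos ((G.mem_neighborFinset p i).mpr (((G.mem_neighborFinset i p).mp hp).symm))]
        · intro q h v hv
          rw [btCount_cons h v (by omega), pow_add]
          have h1 : (SimpleGraph.Walk.cons h v).getVert 1 = q := by
            simp [SimpleGraph.Walk.getVert_cons_succ]
          rw [h1]
          by_cases hq : q = i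
          · by_cases hc : v.getVert 1 = p <;> simp [hq, hc] <;> ring
          · simp [hq]
      rw [Finset.sum_congr rfl inner, Finset.sum_comm]
      have hv1 : ∀ v ∈ G.finsetWalkLength (m+1) i j, v.getVert 1 ∈ G.neighborFinset i := by
        intro v hv
        rw [SimpleGraph.mem_finsetWalkLength_iff] at hv
        have h01 := v.adj_getVert_succ (i := 0) (by omega)
        rw [SimpleGraph.Walk.getVert_zero] at h01
        exact (G.mem_neighborFinset i _).mpr h01
      have hinner2 : ∀ v ∈ G.finsetWalkLength (m+1) i j,
          ∑ p ∈ G.neighborFinset i,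
              μ * ((1-μ)^(btCount v) * (1 - μ * (if v.getVert 1 = p then 1 else 0)))
          = μ * ((d - μ) * (1-μ)^(btCount v)) := by
        intro v hv
        have hsum_e : ∑ p ∈ G.neighborFinset i, (if v.getVert 1 = p then (1:ℝ) else 0) = 1 := by
          rw [Finset.sum_ite_eq, if_pos (hv1 v hv)]
        rw [← Finset.mul_sum]
        rw [show (fun p => (1-μ)^(btCount v) * (1 - μ * (if v.getVert 1 = p then (1:ℝ) else 0)))
            = fun p => (1-μ)^(btCount v) * 1 - (1-μ)^(btCount v) * (μ * (if v.getVert 1 = p then (1:ℝ) else 0)) from funext fun p => by ring]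
        rw [Finset.sum_sub_distrib, Finset.sum_const, ← Finset.mul_sum, ← Finset.mul_sum, hsum_e]
        rw [nsmul_eq_mul]
        rw [← hd]
        ring
      rw [Finset.sum_congr rfl hinner2, ← Finset.mul_sum, ← Finset.mul_sum]
      rfl
    rw [hfirst, hsecond, hsplit, hT2]
    ring
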